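/- Let p be an odd prime and n ≥ 0, and let π : (C_*)^{n+1} → (N_*)^n ⊗ L_* denote the tensor product of the projections C_* → N_* on the first n tensor factors and the projection C_* → L_* on the last factor. If c ∈ 𝒞^{n+1,∞}_* and the image of c under π followed by the truncation (N_*)^n ⊗ L_* → (N_*)^n ⊗ L_{<p^n} vanishes, then already π(c) = 0. -/

import Mathlib

/-- The `n`-fold graded tensor power `(C_*)^n` over `𝔽_p`: the free `ZMod p`-module on
tuples of degrees, the tuple `d` (with all `d i ≥ 1`) corresponding to the basis element
`c_{d 0} ⊗ ⋯ ⊗ c_{d (n-1)}`. -/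
abbrev Vmod (p n : ℕ) : Type := (Fin n → ℕ) →₀ ZMod p

/-- The Koszul sign exponent `d 0 + ⋯ + d (i-1)`. -/
def koszul {n : ℕ} (d : Fin n → ℕ) (i : Fin n) : ℕ :=
  ∑ j ∈ Finset.univ.filter (fun j => j < i), d j

/-- The derivation `∂^{(κ)}` on `(C_*)^n`: on a single factor it sends `c_d` to
`c_{d - 2p^κ + 1}` if `d` is even and `d ≥ 2p^κ` and to `0` otherwise, extended to the
tensor power by the Leibniz rule with Koszul signs. -/
noncomputable def del (p n κ : ℕ) : Vmod p n →ₗ[ZMod p] Vmod p n :=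
  Finsupp.lift (Vmod p n) (ZMod p) (Fin n → ℕ) fun d =>
    ∑ i : Fin n,
      if Even (d i) ∧ 2 * p ^ κ ≤ d i then
        ((-1 : ZMod p) ^ koszul d i) •
          Finsupp.single (Function.update d i (d i - 2 * p ^ κ + 1)) (1 : ZMod p)
      else 0

/-- The subspace `𝒞^{n,∞}_* = ⋂_{κ ≥ 0} ker ∂^{(κ)}` (inside the span of the basis
tensors with all degrees `≥ 1`). -/
noncomputable def CkerInf (p n : ℕ) : Submodule (ZMod p) (Vmod p n) :=
  Finsupp.supported (ZMod p) (ZMod p) {d : Fin n → ℕ | ∀ i, 1 ≤ d i} ⊓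
    ⨅ κ : ℕ, LinearMap.ker (del p n κ)

/-- The index tuples of the basis of `(N_*)^n ⊗ L_*` inside `(C_*)^{n+1}`:
first `n` components odd, last component even (and `≥ 2`); the basis element
`y_{2m}` of `L_*` corresponds to `c_{2m}` in the last tensor factor. -/
def NLSet (n : ℕ) : Set (Fin (n + 1) → ℕ) :=
  {d | (∀ i : Fin (n + 1), i ≠ Fin.last n → Odd (d i)) ∧
    Even (d (Fin.last n)) ∧ 2 ≤ d (Fin.last n)}

open scoped Classical in
/-- The projection `π : (C_*)^{n+1} → (N_*)^n ⊗ L_*`, the tensor product of the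
projections `C_* → N_*` on the first `n` factors and `C_* → L_*` on the last factor. -/
noncomputable def piNL (p n : ℕ) : Vmod p (n + 1) →ₗ[ZMod p] Vmod p (n + 1) :=
  Finsupp.lift (Vmod p (n + 1)) (ZMod p) (Fin (n + 1) → ℕ) fun d =>
    if d ∈ NLSet n then Finsupp.single d (1 : ZMod p) else 0

/-- The truncation map `(N_*)^n ⊗ L_* → (N_*)^n ⊗ L_{<p^k}`: the identity on the
`(N_*)^n`-factors, with `y_{2m} ↦ y_{2m}` for `m < p^k` and `y_{2m} ↦ 0` for `m ≥ p^k`. -/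
noncomputable def truncL (p n k : ℕ) : Vmod p (n + 1) →ₗ[ZMod p] Vmod p (n + 1) :=
  Finsupp.lift (Vmod p (n + 1)) (ZMod p) (Fin (n + 1) → ℕ) fun d =>
    if d (Fin.last n) < 2 * p ^ k then Finsupp.single d (1 : ZMod p) else 0



open MvPolynomial

section Moore

variable (p N : ℕ)

/-- auxiliary: the `k`-th variable, or `0` out of range. -/
noncomputable def vx (k : ℕ) : MvPolynomial (Fin N) (ZMod p) :=
  if h : k < N then MvPolynomial.X ⟨k, h⟩ else 0

/-- Coefficients of the Moore (linearized) polynomials: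
`P_k(Y) = ∑_{κ ≤ k} Gm k κ • Y^(p^κ)` with `P_0(Y) = Y`,
`P_{k+1}(Y) = P_k(Y)^p - P_k(x_k)^(p-1) * P_k(Y)`. -/
noncomputable def Gm : ℕ → ℕ → MvPolynomial (Fin N) (ZMod p)
  | 0, κ => if κ = 0 then 1 else 0
  | (k+1), κ =>
      (if κ = 0 then 0 else Gm k (κ-1) ^ p)
        - (∑ j ∈ Finset.range (k+1), Gm k j * vx p N k ^ p ^ j) ^ (p-1) * Gm k κ

/-- `P_k` evaluated at the `i`-th variable. -/
noncomputable def Gval (i k : ℕ) : MvPolynomial (Fin N) (ZMod p) :=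
  ∑ j ∈ Finset.range (k+1), Gm p N k j * vx p N i ^ p ^ j

lemma Gm_eq_zero (hp : p ≠ 0) : ∀ k κ, k < κ → Gm p N k κ = 0 := by
  intro k
  induction k with
  | zero => intro κ hκ; simp only [Gm, if_neg (by omega : ¬κ = 0)]
  | succ k ih =>
      intro κ hκ
      have h1 : Gm p N k (κ-1) = 0 := ih _ (by omega)
      have h2 : Gm p N k κ = 0 := ih _ (by omega)
      have hκ0 : κ ≠ 0 := by omega
      simp [Gm, hκ0, h1, h2, zero_pow hp]

lemma Gm_top (hp : p ≠ 0) : ∀ k, Gm p N k k = 1 := by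
  intro k
  induction k with
  | zero => simp [Gm]
  | succ k ih =>
      have h2 : Gm p N k (k+1) = 0 := Gm_eq_zero p N hp k (k+1) (by omega)
      simp [Gm, ih, h2, one_pow]

lemma Gval_succ [Fact p.Prime] (i k : ℕ) :
    Gval p N i (k+1) = Gval p N i k ^ p - Gval p N k k ^ (p-1) * Gval p N i k := by
  have hp : p ≠ 0 := (Fact.out : p.Prime).ne_zero
  show (∑ j ∈ Finset.range (k+1+1), Gm p N (k+1) j * vx p N i ^ p ^ j) = _
  have hGm : ∀ j, Gm p N (k+1) j = (if j = 0 then 0 else Gm p N k (j-1) ^ p)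
      - (∑ l ∈ Finset.range (k+1), Gm p N k l * vx p N k ^ p ^ l) ^ (p-1) * Gm p N k j :=
    fun j => rfl
  have step : ∀ j, Gm p N (k+1) j * vx p N i ^ p ^ j =
      (if j = 0 then 0 else Gm p N k (j-1) ^ p) * vx p N i ^ p ^ j
      - (Gval p N k k) ^ (p-1) * (Gm p N k j * vx p N i ^ p ^ j) := by
    intro j; rw [hGm j, sub_mul, mul_assoc]; rfl
  rw [Finset.sum_congr rfl (fun j _ => step j), Finset.sum_sub_distrib]
  congr 1
  · rw [Finset.sum_range_succ', if_pos rfl, zero_mul, add_zero]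
    rw [show (Gval p N i k) ^ p = ∑ j ∈ Finset.range (k+1), (Gm p N k j * vx p N i ^ p ^ j) ^ p
        from sum_pow_char p _ _]
    refine Finset.sum_congr rfl fun j _ => ?_
    rw [if_neg (Nat.succ_ne_zero j), Nat.add_sub_cancel, mul_pow, ← pow_mul, ← pow_succ]
  · rw [← Finset.mul_sum]
    congr 1
    rw [Finset.sum_range_succ, Gm_eq_zero p N hp k (k+1) (by omega), zero_mul, add_zero]
    rfl

lemma Gval_eq_zero [Fact p.Prime] : ∀ k i, i < k → Gval p N i k = 0 := by
  have hp : p ≠ 0 := (Fact.out : p.Prime).ne_zero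
  intro k
  induction k with
  | zero => intro i hi; omega
  | succ k ih =>
      intro i hi
      rw [Gval_succ]
      rcases Nat.lt_or_ge i k with h | h
      · rw [ih i h]; simp [zero_pow hp]
      · have hik : i = k := by omega
        subst hik
        rw [← pow_succ]
        have hq : p - 1 + 1 = p := by omega
        rw [hq, sub_self]

lemma vars_vx (k : ℕ) [Fact p.Prime] : ∀ i ∈ (vx p N k).vars, (i : ℕ) = k := by
  intro i hi
  unfold vx at hi
  split at hi
  · rw [MvPolynomial.vars_X] at hi
    simp only [Finset.mem_singleton] at hi
    subst hi; rfl
  · simp [MvPolynomial.vars_0] at hi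

lemma Gm_vars [Fact p.Prime] : ∀ k κ, ∀ i ∈ (Gm p N k κ).vars, (i : ℕ) < k := by
  classical
  intro k
  induction k with
  | zero =>
      intro κ i hi
      by_cases h : κ = 0 <;> simp [Gm, h, MvPolynomial.vars_one, MvPolynomial.vars_0] at hi
  | succ k ih =>
      intro κ i hi
      have hsum : ∀ i ∈ (∑ l ∈ Finset.range (k+1),
          Gm p N k l * vx p N k ^ p ^ l).vars, (i : ℕ) ≤ k := by
        intro i hi
        have := MvPolynomial.vars_sum_subset (Finset.range (k+1))
          (fun l => Gm p N k l * vx p N k ^ p ^ l) hi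
        rw [Finset.mem_biUnion] at this
        obtain ⟨l, _, hl⟩ := this
        rcases Finset.mem_union.mp (MvPolynomial.vars_mul _ _ hl) with h | h
        · exact le_of_lt (ih l i h)
        · exact le_of_eq (vars_vx p N k i (MvPolynomial.vars_pow _ _ h))
      have hi' := MvPolynomial.vars_sub_subset _ hi
      rcases Finset.mem_union.mp hi' with h | h
      · by_cases hκ : κ = 0
        · simp [hκ, MvPolynomial.vars_0] at h
        · rw [if_neg hκ] at h
          exact lt_trans (ih _ i (MvPolynomial.vars_pow _ _ h)) (Nat.lt_succ_self k)
      · rcases Finset.mem_union.mp (MvPolynomial.vars_mul _ _ h) with h' | h'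
        · exact Nat.lt_succ_of_le (hsum i (MvPolynomial.vars_pow _ _ h'))
        · exact lt_trans (ih _ i h') (Nat.lt_succ_self k)

end Moore

section Pair

variable {p N : ℕ} [Fact p.Prime]

/-- Pairing of a polynomial (viewed as finitely many "shift" coefficients) with a
function on exponent vectors. -/
noncomputable def pairS (g : MvPolynomial (Fin N) (ZMod p))
    (F : ((Fin N) →₀ ℕ) → ZMod p) : ZMod p :=
  ∑ u ∈ g.support, g.coeff u * F u

lemma pairS_eq_sum_subset {g : MvPolynomial (Fin N) (ZMod p)} {T : Finset ((Fin N) →₀ ℕ)}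
    (hT : g.support ⊆ T) (F : ((Fin N) →₀ ℕ) → ZMod p) :
    pairS g F = ∑ u ∈ T, g.coeff u * F u := by
  refine Finset.sum_subset hT fun u _ hu => ?_
  rw [MvPolynomial.notMem_support_iff.mp hu, zero_mul]

lemma pairS_add (g h : MvPolynomial (Fin N) (ZMod p)) (F : ((Fin N) →₀ ℕ) → ZMod p) :
    pairS (g + h) F = pairS g F + pairS h F := by
  classical
  rw [pairS_eq_sum_subset (T := g.support ∪ h.support) MvPolynomial.support_add F,
    pairS_eq_sum_subset (T := g.support ∪ h.support) Finset.subset_union_left F,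
    pairS_eq_sum_subset (T := g.support ∪ h.support) Finset.subset_union_right F,
    ← Finset.sum_add_distrib]
  refine Finset.sum_congr rfl fun u _ => ?_
  rw [MvPolynomial.coeff_add, add_mul]

lemma pairS_sum {ι : Type*} (s : Finset ι) (g : ι → MvPolynomial (Fin N) (ZMod p))
    (F : ((Fin N) →₀ ℕ) → ZMod p) :
    pairS (∑ x ∈ s, g x) F = ∑ x ∈ s, pairS (g x) F := by
  classical
  induction s using Finset.induction_on with
  | empty => simp [pairS]
  | @insert x s hx ih =>
      rw [Finset.sum_insert hx, Finset.sum_insert hx, pairS_add, ih]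

lemma pairS_mul_monomial (g : MvPolynomial (Fin N) (ZMod p)) (v : (Fin N) →₀ ℕ)
    (F : ((Fin N) →₀ ℕ) → ZMod p) :
    pairS (g * MvPolynomial.monomial v 1) F = pairS g (fun u => F (u + v)) := by
  classical
  have hsub : (g * MvPolynomial.monomial v 1).support ⊆ g.support.image (· + v) := by
    intro u hu
    have := MvPolynomial.support_mul _ _ hu
    rw [Finset.mem_add] at this
    obtain ⟨a, ha, b, hb, rfl⟩ := this
    rw [MvPolynomial.support_monomial, if_neg (one_ne_zero)] at hb
    rw [Finset.mem_singleton] at hb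
    subst hb
    exact Finset.mem_image_of_mem _ ha
  rw [pairS_eq_sum_subset hsub F,
    Finset.sum_image (fun a _ b _ h => by simpa using h)]
  refine Finset.sum_congr rfl fun u _ => ?_
  rw [MvPolynomial.coeff_mul_monomial, mul_one]

lemma pairS_monomial (v : (Fin N) →₀ ℕ) (F : ((Fin N) →₀ ℕ) → ZMod p) :
    pairS (MvPolynomial.monomial v (1 : ZMod p)) F = F v := by
  classical
  unfold pairS
  rw [MvPolynomial.support_monomial, if_neg (one_ne_zero), Finset.sum_singleton,
    MvPolynomial.coeff_monomial, if_pos rfl, one_mul]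

lemma pairS_zero (F : ((Fin N) →₀ ℕ) → ZMod p) : pairS (0 : MvPolynomial (Fin N) (ZMod p)) F = 0 := by
  simp [pairS]

end Pair

section Core

variable {p : ℕ} [Fact p.Prime]

lemma neg_one_pow_koszul {N : ℕ} (e w : Fin N → ℕ) (i : Fin N) :
    (-1 : ZMod p) ^ koszul (fun j => e j + 2 * w j) i = (-1 : ZMod p) ^ koszul e i := by
  unfold koszul
  rw [Finset.sum_add_distrib, ← Finset.mul_sum, pow_add, pow_mul, neg_one_sq, one_pow, mul_one]

lemma pairS_combo {N : ℕ} {ι : Type*} [Fintype ι] (g : MvPolynomial (Fin N) (ZMod p))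
    (c : ι → ZMod p) (Fs : ι → ((Fin N) →₀ ℕ) → ZMod p) :
    pairS g (fun w => ∑ i, c i * Fs i w) = ∑ i, c i * pairS g (Fs i) := by
  show (∑ u ∈ g.support, MvPolynomial.coeff u g * ∑ i, c i * Fs i u)
      = ∑ i, c i * ∑ u ∈ g.support, MvPolynomial.coeff u g * Fs i u
  calc (∑ u ∈ g.support, MvPolynomial.coeff u g * ∑ i, c i * Fs i u)
      = ∑ u ∈ g.support, ∑ i, c i * (MvPolynomial.coeff u g * Fs i u) := by
        refine Finset.sum_congr rfl fun u _ => ?_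
        rw [Finset.mul_sum]
        exact Finset.sum_congr rfl fun i _ => by ring
    _ = ∑ i, ∑ u ∈ g.support, c i * (MvPolynomial.coeff u g * Fs i u) := Finset.sum_comm
    _ = ∑ i, c i * ∑ u ∈ g.support, MvPolynomial.coeff u g * Fs i u :=
        Finset.sum_congr rfl fun i _ => by rw [Finset.mul_sum]

lemma core_lemma (n : ℕ) (f : (Fin (n+1) → ℕ) → ZMod p)
    (hR : ∀ (κ : ℕ) (e : Fin (n+1) → ℕ), (∀ j, Odd (e j)) →
      ∑ i, (-1 : ZMod p) ^ koszul e i * f (Function.update e i (e i + (2 * p ^ κ - 1))) = 0)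
    (hlow : ∀ d : Fin (n+1) → ℕ, (∀ j, j ≠ Fin.last n → Odd (d j)) →
      Even (d (Fin.last n)) → d (Fin.last n) < 2 * p ^ n → f d = 0) :
    ∀ d : Fin (n+1) → ℕ, (∀ j, j ≠ Fin.last n → Odd (d j)) →
      Even (d (Fin.last n)) → f d = 0 := by
  classical
  have hp0 : p ≠ 0 := (Fact.out : p.Prime).ne_zero
  have hp1 : 1 < p := (Fact.out : p.Prime).one_lt
  have hpn : 1 ≤ p ^ n := Nat.one_le_pow _ _ (by omega)
  suffices H : ∀ (m : ℕ) (d : Fin (n+1) → ℕ), d (Fin.last n) = m →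
      (∀ j, j ≠ Fin.last n → Odd (d j)) → Even (d (Fin.last n)) → f d = 0 by
    intro d h1 h2; exact H _ d rfl h1 h2
  intro m
  induction m using Nat.strong_induction_on with
  | _ m IH =>
  intro d hdm hodd heven
  by_cases hsmall : d (Fin.last n) < 2 * p ^ n
  · exact hlow d hodd heven hsmall
  push_neg at hsmall
  set L : Fin (n+1) := Fin.last n with hLdef
  set e : Fin (n+1) → ℕ := Function.update d L (d L - (2 * p ^ n - 1)) with he
  have heL : e L = d L - (2 * p ^ n - 1) := Function.update_self _ _ _
  have heodd : ∀ j, Odd (e j) := by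
    intro j
    by_cases hj : j = L
    · subst hj; rw [heL]
      exact Nat.Even.sub_odd (by omega) heven ⟨p ^ n - 1, by omega⟩
    · rw [he, Function.update_of_ne hj]; exact hodd j hj
  have he_ge1 : ∀ j, 1 ≤ e j := by
    intro j; rcases heodd j with ⟨k, hk⟩; omega
  set F : Fin (n+1) → ((Fin (n+1) →₀ ℕ) → ZMod p) :=
    fun i u => f (fun j => (if j = i then e j - 1 else e j) + 2 * u j) with hF
  set ε : Fin (n+1) → ZMod p := fun i => (-1 : ZMod p) ^ koszul e i with hε
  -- Step 1: the basic relations, re-expressed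
  have step1 : ∀ (κ : ℕ) (w : Fin (n+1) →₀ ℕ),
      ∑ i, ε i * F i (w + Finsupp.single i (p ^ κ)) = 0 := by
    intro κ w
    have hpow : 1 ≤ p ^ κ := Nat.one_le_pow _ _ (by omega)
    have h0 := hR κ (fun j => e j + 2 * w j)
      (fun j => (heodd j).add_even (even_two_mul _))
    refine Eq.trans (Finset.sum_congr rfl fun i _ => ?_) h0
    show (-1 : ZMod p) ^ koszul e i *
        f (fun j => (if j = i then e j - 1 else e j) + 2 * ((w + Finsupp.single i (p ^ κ)) j))
      = (-1 : ZMod p) ^ koszul (fun j => e j + 2 * w j) i *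
        f (Function.update (fun j => e j + 2 * w j) i
          ((fun j => e j + 2 * w j) i + (2 * p ^ κ - 1)))
    have hk : koszul (fun j => e j + 2 * w j) i = koszul e i + 2 * koszul (fun j => w j) i := by
      unfold koszul
      rw [Finset.mul_sum, ← Finset.sum_add_distrib]
    rw [hk, pow_add, pow_mul, neg_one_sq, one_pow, mul_one]
    refine congrArg _ (congrArg f (funext fun j => ?_))
    by_cases hj : j = i
    · subst hj
      rw [Function.update_self, if_pos rfl, Finsupp.add_apply, Finsupp.single_apply, if_pos rfl]
      have := he_ge1 j
      show e j - 1 + 2 * (w j + p ^ κ) = e j + 2 * w j + (2 * p ^ κ - 1)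
      omega
    · rw [Function.update_of_ne hj, if_neg hj, Finsupp.add_apply, Finsupp.single_apply,
        if_neg (fun hh => hj hh.symm), add_zero]
  -- the Moore combination
  set γ : ℕ → MvPolynomial (Fin (n+1)) (ZMod p) := fun κ => Gm p (n+1) n κ with hγ
  set gpoly : Fin (n+1) → MvPolynomial (Fin (n+1)) (ZMod p) :=
    fun i => ∑ κ ∈ Finset.range (n+1), γ κ * MvPolynomial.monomial
      (Finsupp.single i (p ^ κ)) 1 with hgp
  have hgval : ∀ i : Fin (n+1), gpoly i = Gval p (n+1) (i : ℕ) n := by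
    intro i
    show (∑ κ ∈ Finset.range (n+1), γ κ * MvPolynomial.monomial (Finsupp.single i (p ^ κ)) 1)
      = Gval p (n+1) (i : ℕ) n
    refine Finset.sum_congr rfl fun κ _ => ?_
    congr 1
    rw [← MvPolynomial.X_pow_eq_monomial]
    congr 1
    rw [vx, dif_pos i.isLt]
  have step3 : ∑ i, ε i * pairS (gpoly i) (F i) = 0 := by
    have e1 : ∀ i : Fin (n+1), pairS (gpoly i) (F i)
        = ∑ κ ∈ Finset.range (n+1), pairS (γ κ)
            (fun w => F i (w + Finsupp.single i (p ^ κ))) := by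
      intro i
      show pairS (∑ κ ∈ Finset.range (n+1),
        γ κ * MvPolynomial.monomial (Finsupp.single i (p ^ κ)) 1) (F i) = _
      rw [pairS_sum]
      exact Finset.sum_congr rfl fun κ _ => pairS_mul_monomial _ _ _
    calc ∑ i, ε i * pairS (gpoly i) (F i)
        = ∑ i, ∑ κ ∈ Finset.range (n+1), ε i * pairS (γ κ)
            (fun w => F i (w + Finsupp.single i (p ^ κ))) := by
          refine Finset.sum_congr rfl fun i _ => ?_
          rw [e1 i, Finset.mul_sum]
      _ = ∑ κ ∈ Finset.range (n+1), ∑ i, ε i * pairS (γ κ)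
            (fun w => F i (w + Finsupp.single i (p ^ κ))) := Finset.sum_comm
      _ = ∑ κ ∈ Finset.range (n+1), pairS (γ κ)
            (fun w => ∑ i, ε i * F i (w + Finsupp.single i (p ^ κ))) := by
          refine Finset.sum_congr rfl fun κ _ => ?_
          rw [pairS_combo]
      _ = 0 := by
          refine Finset.sum_eq_zero fun κ _ => ?_
          show (∑ u ∈ (γ κ).support, MvPolynomial.coeff u (γ κ) *
            (∑ i, ε i * F i (u + Finsupp.single i (p ^ κ)))) = 0
          refine Finset.sum_eq_zero fun u _ => ?_
          rw [step1 κ u, mul_zero]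
  -- all terms except the last one vanish
  have step5 : ε L * pairS (gpoly L) (F L) = 0 := by
    rw [← step3]
    refine (Finset.sum_eq_single_of_mem (f := fun i => ε i * pairS (gpoly i) (F i)) L
      (Finset.mem_univ L) fun i _ hne => ?_).symm
    show ε i * pairS (gpoly i) (F i) = 0
    rw [hgval i, Gval_eq_zero p (n+1) n (i : ℕ) (Fin.val_lt_last hne), pairS_zero, mul_zero]
  have step5' : pairS (gpoly L) (F L) = 0 := by
    have hsq : ε L * ε L = 1 := by
      show (-1 : ZMod p) ^ koszul e L * (-1 : ZMod p) ^ koszul e L = 1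
      rw [← pow_add]
      exact Even.neg_one_pow ⟨koszul e L, rfl⟩
    calc pairS (gpoly L) (F L) = (ε L * ε L) * pairS (gpoly L) (F L) := by rw [hsq, one_mul]
      _ = ε L * (ε L * pairS (gpoly L) (F L)) := by ring
      _ = 0 := by rw [step5, mul_zero]
  -- split off the head term
  set E : MvPolynomial (Fin (n+1)) (ZMod p) :=
    ∑ κ ∈ Finset.range n, γ κ * MvPolynomial.monomial (Finsupp.single L (p ^ κ)) 1 with hE
  have hsplit : gpoly L = E + MvPolynomial.monomial (Finsupp.single L (p ^ n)) 1 := by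
    show (∑ κ ∈ Finset.range (n+1), γ κ * MvPolynomial.monomial (Finsupp.single L (p ^ κ)) 1)
      = E + MvPolynomial.monomial (Finsupp.single L (p ^ n)) 1
    rw [Finset.sum_range_succ]
    congr 1
    show Gm p (n+1) n n * MvPolynomial.monomial (Finsupp.single L (p ^ n)) 1 = _
    rw [Gm_top p (n+1) hp0 n, one_mul]
  have htop : F L (Finsupp.single L (p ^ n)) = f d := by
    show f (fun j => (if j = L then e j - 1 else e j) + 2 * (Finsupp.single L (p ^ n)) j) = f d
    refine congrArg f (funext fun j => ?_)
    by_cases hj : j = L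
    · subst hj
      rw [if_pos rfl, Finsupp.single_apply, if_pos rfl, heL]
      omega
    · rw [if_neg hj, Finsupp.single_apply, if_neg (fun hh => hj hh.symm), mul_zero, add_zero,
        he, Function.update_of_ne hj]
  -- support bound for the tail
  have hEsupp : ∀ u ∈ E.support, u L < p ^ n := by
    intro u hu
    rw [hE] at hu
    have h1 := MvPolynomial.support_sum hu
    rw [Finset.mem_biUnion] at h1
    obtain ⟨κ, hκ, hu2⟩ := h1
    rw [Finset.mem_range] at hκ
    have h2 := MvPolynomial.support_mul _ _ hu2
    rw [Finset.mem_add] at h2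
    obtain ⟨a, ha, b, hb, rfl⟩ := h2
    rw [MvPolynomial.support_monomial, if_neg one_ne_zero, Finset.mem_singleton] at hb
    subst hb
    have haL : a L = 0 := by
      by_contra haL
      have hvars : L ∈ (γ κ).vars := (MvPolynomial.mem_vars L).mpr
        ⟨a, ha, Finsupp.mem_support_iff.mpr haL⟩
      have hlt := Gm_vars p (n+1) n κ L hvars
      rw [hLdef, Fin.val_last] at hlt
      omega
    rw [Finsupp.add_apply, haL, Finsupp.single_apply, if_pos rfl, zero_add]
    exact Nat.pow_lt_pow_right hp1 hκ
  -- the tail vanishes by induction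
  have hzero : pairS E (F L) = 0 := by
    show (∑ u ∈ E.support, MvPolynomial.coeff u E * F L u) = 0
    refine Finset.sum_eq_zero fun u hu => ?_
    have huL := hEsupp u hu
    have hd' : f (fun j => (if j = L then e j - 1 else e j) + 2 * u j) = 0 := by
      refine IH (e L - 1 + 2 * u L) ?_ _ ?_ ?_ ?_
      · rw [heL, ← hdm]
        omega
      · show (if (L : Fin (n+1)) = L then e L - 1 else e L) + 2 * u L = e L - 1 + 2 * u L
        rw [if_pos rfl]
      · intro j hj
        show Odd ((if j = L then e j - 1 else e j) + 2 * u j)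
        rw [if_neg hj]
        exact (heodd j).add_even (even_two_mul _)
      · show Even ((if (L : Fin (n+1)) = L then e L - 1 else e L) + 2 * u L)
        rw [if_pos rfl]
        exact Even.add (Nat.Odd.sub_odd (heodd L) odd_one) (even_two_mul _)
    have hFu : F L u = 0 := hd'
    rw [hFu, mul_zero]
  rw [hsplit, pairS_add, pairS_monomial, htop, hzero, zero_add] at step5'
  exact step5'

end Core

section Translation

variable {p : ℕ} [Fact p.Prime]

lemma lift_ite_apply {N : ℕ} (P : (Fin N → ℕ) → Prop) [DecidablePred P]
    (X : Vmod p N) (e : Fin N → ℕ) :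
    (Finsupp.lift (Vmod p N) (ZMod p) (Fin N → ℕ)
      (fun d => if P d then Finsupp.single d (1 : ZMod p) else 0) X) e
    = if P e then X e else 0 := by
  classical
  rw [Finsupp.lift_apply, Finsupp.sum_apply]
  have hterm : ∀ d, ((X d) • if P d then Finsupp.single d (1 : ZMod p) else 0) e
      = if d = e then (if P e then X d else 0) else 0 := by
    intro d
    rw [Finsupp.smul_apply]
    by_cases hd : d = e
    · subst hd
      by_cases hP : P d <;> simp [hP, Finsupp.single_apply]
    · by_cases hP : P d <;> simp [hP, Finsupp.single_apply, hd]
  rw [Finsupp.sum, Finset.sum_congr rfl (fun d _ => hterm d), Finset.sum_ite_eq']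
  by_cases hmem : e ∈ X.support
  · rw [if_pos hmem]
  · rw [if_neg hmem, Finsupp.notMem_support_iff.mp hmem]
    simp

open scoped Classical in
lemma piNL_apply {n : ℕ} (X : Vmod p (n+1)) (e : Fin (n+1) → ℕ) :
    piNL p n X e = if e ∈ NLSet n then X e else 0 := by
  classical
  unfold piNL
  exact lift_ite_apply _ X e

lemma truncL_apply {n k : ℕ} (X : Vmod p (n+1)) (e : Fin (n+1) → ℕ) :
    truncL p n k X e = if e (Fin.last n) < 2 * p ^ k then X e else 0 := by
  unfold truncL
  exact lift_ite_apply _ X e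

lemma del_apply_odd {N : ℕ} (κ : ℕ) (c : Vmod p N) (e : Fin N → ℕ)
    (he : ∀ j, Odd (e j)) :
    del p N κ c e
      = ∑ i, (-1 : ZMod p) ^ koszul e i * c (Function.update e i (e i + (2 * p ^ κ - 1))) := by
  classical
  have hp0 : p ≠ 0 := (Fact.out : p.Prime).ne_zero
  have hpow : 1 ≤ p ^ κ := Nat.one_le_pow _ _ (by omega)
  unfold del
  rw [Finsupp.lift_apply, Finsupp.sum_apply, Finsupp.sum]
  have hterm : ∀ d, ((c d) • ∑ i, if Even (d i) ∧ 2 * p ^ κ ≤ d i then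
      ((-1 : ZMod p) ^ koszul d i) •
        Finsupp.single (Function.update d i (d i - 2 * p ^ κ + 1)) (1 : ZMod p) else 0) e
      = ∑ i, c d * (if Even (d i) ∧ 2 * p ^ κ ≤ d i then
          (-1 : ZMod p) ^ koszul d i *
            (if Function.update d i (d i - 2 * p ^ κ + 1) = e then 1 else 0) else 0) := by
    intro d
    rw [Finsupp.smul_apply, Finsupp.finset_sum_apply, smul_eq_mul, Finset.mul_sum]
    refine Finset.sum_congr rfl fun i _ => congrArg (fun z => c d * z) ?_
    split_ifs with hC hU
    · simp [Finsupp.single_apply, hU]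
    · simp [Finsupp.single_apply, hU]
    · rfl
  rw [Finset.sum_congr rfl (fun d _ => hterm d), Finset.sum_comm]
  refine Finset.sum_congr rfl fun i _ => ?_
  set D : Fin N → ℕ := Function.update e i (e i + (2 * p ^ κ - 1)) with hD
  have hDi : D i = e i + (2 * p ^ κ - 1) := Function.update_self _ _ _
  have hDj : ∀ j, j ≠ i → D j = e j := fun j hj => Function.update_of_ne hj _ _
  have hcond : Even (D i) ∧ 2 * p ^ κ ≤ D i := by
    constructor
    · rw [hDi]
      exact (he i).add_odd ⟨p ^ κ - 1, by omega⟩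
    · rw [hDi]
      rcases he i with ⟨k, hk⟩
      omega
  have hupd : Function.update D i (D i - 2 * p ^ κ + 1) = e := by
    rw [hDi, show e i + (2 * p ^ κ - 1) - 2 * p ^ κ + 1 = e i from by omega, hD,
      Function.update_idem, Function.update_eq_self]
  have hkos : koszul D i = koszul e i := by
    unfold koszul
    refine Finset.sum_congr rfl fun j hj => ?_
    rw [Finset.mem_filter] at hj
    exact hDj j (ne_of_lt hj.2)
  rw [Finset.sum_eq_single D ?_ ?_]
  · rw [if_pos hcond, if_pos hupd, hkos, mul_one]
    ring
  · intro d _ hne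
    by_cases hC : Even (d i) ∧ 2 * p ^ κ ≤ d i
    · rw [if_pos hC]
      by_cases hU : Function.update d i (d i - 2 * p ^ κ + 1) = e
      · exfalso
        apply hne
        funext j
        by_cases hj : j = i
        · subst hj
          have h1 := congrFun hU j
          rw [Function.update_self] at h1
          rw [hD, Function.update_self]
          omega
        · have h1 := congrFun hU j
          rw [Function.update_of_ne hj] at h1
          rw [hD, Function.update_of_ne hj, ← h1]
      · rw [if_neg hU, mul_zero, mul_zero]
    · rw [if_neg hC, mul_zero]
  · intro hDn
    rw [Finsupp.notMem_support_iff.mp hDn, zero_mul]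

end Translation

/-- If `c ∈ 𝒞^{n+1,∞}_*` and the image of `c` under `π` followed by the truncation
`(N_*)^n ⊗ L_* → (N_*)^n ⊗ L_{<p^n}` vanishes, then already `π(c) = 0`. -/
theorem stmt10 (p : ℕ) (hp : p.Prime) (hodd : Odd p) (n : ℕ)
    (c : Vmod p (n + 1)) (hc : c ∈ CkerInf p (n + 1))
    (h : truncL p n n (piNL p n c) = 0) :
    piNL p n c = 0 := by
  classical
  haveI : Fact p.Prime := ⟨hp⟩
  rw [CkerInf, Submodule.mem_inf] at hc
  obtain ⟨hsupp, hker⟩ := hc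
  have hker' : ∀ κ, del p (n+1) κ c = 0 := by
    intro κ
    exact LinearMap.mem_ker.mp ((Submodule.mem_iInf _).mp hker κ)
  have hsupp' : ∀ d : Fin (n+1) → ℕ, ¬(∀ i, 1 ≤ d i) → c d = 0 := by
    intro d hd
    exact ((Finsupp.mem_supported' (R := ZMod p) _).mp hsupp) d hd
  have hlow0 : ∀ e ∈ NLSet n, e (Fin.last n) < 2 * p ^ n → c e = 0 := by
    intro e heN hlt
    have h0 : truncL p n n (piNL p n c) e = 0 := by rw [h]; rfl
    rw [truncL_apply, if_pos hlt, piNL_apply, if_pos heN] at h0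
    exact h0
  have hR : ∀ (κ : ℕ) (e : Fin (n+1) → ℕ), (∀ j, Odd (e j)) →
      ∑ i, (-1 : ZMod p) ^ koszul e i * c (Function.update e i (e i + (2 * p ^ κ - 1))) = 0 := by
    intro κ e he
    rw [← del_apply_odd κ c e he, hker' κ]
    rfl
  have hlowc : ∀ d : Fin (n+1) → ℕ, (∀ j, j ≠ Fin.last n → Odd (d j)) →
      Even (d (Fin.last n)) → d (Fin.last n) < 2 * p ^ n → c d = 0 := by
    intro d hoddd hevend hlt
    by_cases hall : ∀ i, 1 ≤ d i
    · refine hlow0 d ⟨hoddd, hevend, ?_⟩ hlt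
      rcases hevend with ⟨k, hk⟩
      have := hall (Fin.last n)
      omega
    · exact hsupp' d hall
  have hvanish : ∀ e ∈ NLSet n, c e = 0 := fun e heN =>
    core_lemma n (fun d => c d) hR hlowc e heN.1 heN.2.1
  apply Finsupp.ext
  intro e
  rw [piNL_apply]
  split_ifs with hh
  · rw [hvanish e hh]
    rfl
  · rfl
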